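/- (Bouten–van Handel reference probability theorem, finite-dimensional version.) Let E[·] = tr(ρ·) be a faithful state on the algebra A of all operators on a finite-dimensional Hilbert space, let Z be a commutative von Neumann subalgebra, U a unitary, and Y = U*ZU. Suppose F belongs to the commutant Z′ and E[U*XU] = E[F*XF] for every X ∈ Z′. Then for every X ∈ Z′ with σ(I) invertible, E[U*XU | Y] = σ(I)^{-1} σ(X), where σ(X) = U* E[F*XF | Z] U. -/

import Mathlib

open Matrix ComplexOrder BigOperators

/-- If `tr(Cᴴ C) = 0` then `C = 0`. -/
lemma aux_trace_conjTranspose_mul_self_eq_zero {n : ℕ} {C : Matrix (Fin n) (Fin n) ℂ}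
    (h : (Cᴴ * C).trace = 0) : C = 0 := by
  have hdiag : ∀ j, (Cᴴ * C) j j = 0 := by
    have hnn : ∀ j ∈ Finset.univ, (0 : ℂ) ≤ (Cᴴ * C) j j := by
      intro j _
      have := dotProduct_star_self_nonneg (fun i => C i j)
      simpa [Matrix.mul_apply, Matrix.conjTranspose_apply, dotProduct] using this
    have := (Finset.sum_eq_zero_iff_of_nonneg hnn).mp h
    intro j; exact this j (Finset.mem_univ j)
  ext i j
  have hj := hdiag j
  have : dotProduct (star (fun i => C i j)) (fun i => C i j) = 0 := by
    simpa [Matrix.mul_apply, Matrix.conjTranspose_apply, dotProduct] using hj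
  have := dotProduct_star_self_eq_zero.mp this
  simpa using congrFun this i

/-- Faithfulness of the state `tr(ρ ·)` for a positive definite `ρ`. -/
lemma aux_faithful {n : ℕ} {ρ C : Matrix (Fin n) (Fin n) ℂ} (hρ : ρ.PosDef)
    (h : (ρ * (Cᴴ * C)).trace = 0) : C = 0 := by
  obtain ⟨R, hR⟩ : ∃ R : Matrix (Fin n) (Fin n) ℂ, ρ = Rᴴ * R := by
    open scoped MatrixOrder in
    obtain ⟨B, hB⟩ := CStarAlgebra.nonneg_iff_eq_star_mul_self.mp hρ.posSemidef.nonneg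
    exact ⟨B, by rw [hB, Matrix.star_eq_conjTranspose]⟩
  have hRu : IsUnit R := by
    have hdet : IsUnit ρ.det := (Matrix.isUnit_iff_isUnit_det ρ).mp hρ.isUnit
    rw [hR, Matrix.det_mul] at hdet
    exact (Matrix.isUnit_iff_isUnit_det R).mpr (isUnit_of_mul_isUnit_right hdet)
  have key : ((R * Cᴴ)ᴴ * (R * Cᴴ)).trace = 0 := by
    have e : ((R * Cᴴ)ᴴ * (R * Cᴴ)) = Cᴴᴴ * ((Rᴴ * R) * Cᴴ) := by
      simp [Matrix.conjTranspose_mul, Matrix.mul_assoc]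
    have h' : (ρ * Cᴴ * C).trace = 0 := by rwa [Matrix.mul_assoc]
    calc ((R * Cᴴ)ᴴ * (R * Cᴴ)).trace = (Cᴴᴴ * ((Rᴴ * R) * Cᴴ)).trace := by rw [e]
      _ = (((Rᴴ * R) * Cᴴ) * Cᴴᴴ).trace := Matrix.trace_mul_comm _ _
      _ = (ρ * Cᴴ * C).trace := by rw [← hR, Matrix.conjTranspose_conjTranspose]
      _ = 0 := h'
  have hRC : R * Cᴴ = 0 := aux_trace_conjTranspose_mul_self_eq_zero key
  have : Cᴴ = 0 := hRu.mul_left_cancel (by rw [hRC, mul_zero])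
  simpa using congrArg Matrix.conjTranspose this

/-- In a finite-dimensional matrix algebra, if `K` lies in a subalgebra `Z` and
is a unit in the full matrix ring, then it has a right inverse inside `Z`. -/
lemma aux_inv_mem {n : ℕ} (Z : StarSubalgebra ℂ (Matrix (Fin n) (Fin n) ℂ))
    {K : Matrix (Fin n) (Fin n) ℂ} (hK : K ∈ Z) (hKu : IsUnit K) :
    ∃ b ∈ Z, K * b = 1 := by
  set S : Submodule ℂ (Matrix (Fin n) (Fin n) ℂ) := Subalgebra.toSubmodule Z.toSubalgebra with hS
  have hmemS : ∀ x, x ∈ S ↔ x ∈ Z := fun x => Iff.rfl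
  have hKS : K ∈ S := hK
  let f : S →ₗ[ℂ] S :=
    { toFun := fun w => ⟨K * w.1, (hmemS _).mpr (mul_mem hK w.2)⟩
      map_add' := fun w w' => Subtype.ext (by simp [mul_add])
      map_smul' := fun c w => Subtype.ext (by simp [mul_smul_comm]) }
  have hinj : Function.Injective f := by
    intro w w' h
    have h1 : K * w.1 = K * w'.1 := congrArg Subtype.val h
    exact Subtype.ext (hKu.mul_left_cancel h1)
  have hsurj := LinearMap.injective_iff_surjective.mp hinj
  obtain ⟨b, hb⟩ := hsurj ⟨1, (hmemS 1).mpr (one_mem Z)⟩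
  refine ⟨b.1, b.2, ?_⟩
  exact congrArg Subtype.val hb

/-- (Bouten–van Handel reference probability theorem, finite-dimensional
version.) Let `tr(ρ ·)` be a faithful state, `Z` a commutative *-subalgebra,
`U` a unitary and `Y = U*ZU`. Suppose `F` lies in the commutant of `Z` and
`tr(ρ U*XU) = tr(ρ F*XF)` for all `X` in the commutant. Then, with
`σ(X) = U* E[F*XF|Z] U`, for every `X` in the commutant with `σ(I)` invertible,
`E[U*XU | Y] = σ(I)⁻¹ σ(X)`. -/
theorem bouten_van_handel {n : ℕ}
    (ρ : Matrix (Fin n) (Fin n) ℂ) (hρ : ρ.PosDef) (hρtr : ρ.trace = 1)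
    (U : Matrix (Fin n) (Fin n) ℂ) (hU : U ∈ Matrix.unitaryGroup (Fin n) ℂ)
    (Z : StarSubalgebra ℂ (Matrix (Fin n) (Fin n) ℂ))
    (hZcomm : ∀ W₁ ∈ Z, ∀ W₂ ∈ Z, W₁ * W₂ = W₂ * W₁)
    (F : Matrix (Fin n) (Fin n) ℂ)
    (hF : ∀ W ∈ Z, Commute W F)
    (hrep : ∀ X : Matrix (Fin n) (Fin n) ℂ, (∀ W ∈ Z, Commute W X) →
      (ρ * (Uᴴ * X * U)).trace = (ρ * (Fᴴ * X * F)).trace)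
    -- `CE` : conditional expectation onto `Z` w.r.t. `ρ`
    (CE : Matrix (Fin n) (Fin n) ℂ → Matrix (Fin n) (Fin n) ℂ)
    (hCEmem : ∀ A, CE A ∈ Z)
    (hCE : ∀ A, ∀ W ∈ Z, (ρ * CE A * W).trace = (ρ * A * W).trace)
    -- `CEY` : conditional expectation onto `Y = U*ZU` w.r.t. `ρ`
    (CEY : Matrix (Fin n) (Fin n) ℂ → Matrix (Fin n) (Fin n) ℂ)
    (hCEYmem : ∀ A, ∃ W ∈ Z, CEY A = Uᴴ * W * U)
    (hCEY : ∀ A, ∀ W ∈ Z,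
      (ρ * CEY A * (Uᴴ * W * U)).trace = (ρ * A * (Uᴴ * W * U)).trace)
    -- the unnormalized conditional expectation `σ`
    (σ : Matrix (Fin n) (Fin n) ℂ → Matrix (Fin n) (Fin n) ℂ)
    (hσ : ∀ X, σ X = Uᴴ * CE (Fᴴ * X * F) * U)
    (hinv : IsUnit (σ 1)) :
    ∀ X : Matrix (Fin n) (Fin n) ℂ, (∀ W ∈ Z, Commute W X) →
      CEY (Uᴴ * X * U) = (σ 1)⁻¹ * σ X := by
  intro X hX
  -- basic unitary facts
  have hU1 : Uᴴ * U = 1 := by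
    have := hU.1; rwa [Matrix.star_eq_conjTranspose] at this
  have hU2 : U * Uᴴ = 1 := by
    have := hU.2; rwa [Matrix.star_eq_conjTranspose] at this
  set K : Matrix (Fin n) (Fin n) ℂ := CE (Fᴴ * 1 * F) with hKdef
  set G : Matrix (Fin n) (Fin n) ℂ := CE (Fᴴ * X * F) with hGdef
  have hKZ : K ∈ Z := hCEmem _
  have hGZ : G ∈ Z := hCEmem _
  have hσ1 : σ 1 = Uᴴ * K * U := hσ 1
  have hσX : σ X = Uᴴ * G * U := hσ X
  -- K is a unit
  have hUu : IsUnit U := ⟨⟨U, Uᴴ, hU2, hU1⟩, rfl⟩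
  have hUHu : IsUnit Uᴴ := ⟨⟨Uᴴ, U, hU1, hU2⟩, rfl⟩
  have hKu : IsUnit K := by
    have : K = U * (σ 1) * Uᴴ := by
      rw [hσ1, ← Matrix.mul_assoc, ← Matrix.mul_assoc, hU2, Matrix.one_mul,
        Matrix.mul_assoc, hU2, Matrix.mul_one]
    rw [this]
    exact (hUu.mul hinv).mul hUHu
  obtain ⟨b, hbZ, hKb⟩ := aux_inv_mem Z hKZ hKu
  have hbK : b * K = 1 := mul_eq_one_comm.mp hKb
  -- the right-hand side equals Uᴴ * (b * G) * U
  have hinvσ1 : (σ 1)⁻¹ = Uᴴ * b * U := by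
    apply Matrix.inv_eq_right_inv
    rw [hσ1]
    calc Uᴴ * K * U * (Uᴴ * b * U) = Uᴴ * (K * (U * Uᴴ) * b) * U := by
          simp only [Matrix.mul_assoc]
      _ = 1 := by rw [hU2, Matrix.mul_one, hKb, Matrix.mul_one, hU1]
  have hRHS : (σ 1)⁻¹ * σ X = Uᴴ * (b * G) * U := by
    rw [hinvσ1, hσX]
    calc Uᴴ * b * U * (Uᴴ * G * U) = Uᴴ * (b * (U * Uᴴ) * G) * U := by
          simp only [Matrix.mul_assoc]
      _ = Uᴴ * (b * G) * U := by rw [hU2, Matrix.mul_one]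
  -- key trace identity: for every W' in Z, tr(ρ Uᴴ W' U) = tr(ρ K W')
  have hcomm : ∀ W' ∈ Z, ∀ W ∈ Z, Commute W W' := fun W' hW' W hW =>
    (hZcomm W hW W' hW')
  have hZrep : ∀ W' ∈ Z, (ρ * (Uᴴ * W' * U)).trace = (ρ * K * W').trace := by
    intro W' hW'
    rw [hrep W' (hcomm W' hW'), hCE (Fᴴ * 1 * F) W' hW']
    congr 1
    have hFW : W' * F = F * W' := hF W' hW'
    calc ρ * (Fᴴ * W' * F) = ρ * (Fᴴ * (W' * F)) := by rw [Matrix.mul_assoc]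
      _ = ρ * (Fᴴ * (F * W')) := by rw [hFW]
      _ = ρ * (Fᴴ * 1 * F) * W' := by simp only [Matrix.mul_one, Matrix.mul_assoc]
  -- value of the conditional expectation side
  obtain ⟨V, hVZ, hVeq⟩ := hCEYmem (Uᴴ * X * U)
  -- both V and b*G have the same ρ-traces against Z
  have hXWcomm : ∀ W ∈ Z, ∀ W' ∈ Z, Commute W' (X * W) := by
    intro W hW W' hW'
    exact (hX W' hW').mul_right (hZcomm W' hW' W hW)
  have htraceV : ∀ W ∈ Z, (ρ * (Uᴴ * (V * W) * U)).trace = (ρ * G * W).trace := by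
    intro W hW
    have h1 := hCEY (Uᴴ * X * U) W hW
    rw [hVeq] at h1
    have e1 : ρ * (Uᴴ * V * U) * (Uᴴ * W * U) = ρ * (Uᴴ * (V * W) * U) := by
      calc ρ * (Uᴴ * V * U) * (Uᴴ * W * U)
          = ρ * (Uᴴ * (V * ((U * Uᴴ) * W)) * U) := by simp only [Matrix.mul_assoc]
        _ = ρ * (Uᴴ * (V * W) * U) := by rw [hU2, Matrix.one_mul, Matrix.mul_assoc]
    have e2 : ρ * (Uᴴ * X * U) * (Uᴴ * W * U) = ρ * (Uᴴ * (X * W) * U) := by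
      calc ρ * (Uᴴ * X * U) * (Uᴴ * W * U)
          = ρ * (Uᴴ * (X * ((U * Uᴴ) * W)) * U) := by simp only [Matrix.mul_assoc]
        _ = ρ * (Uᴴ * (X * W) * U) := by rw [hU2, Matrix.one_mul, Matrix.mul_assoc]
    rw [e1, e2] at h1
    rw [h1, hrep (X * W) (hXWcomm W hW)]
    have hFW : W * F = F * W := hF W hW
    have e3 : ρ * (Fᴴ * (X * W) * F) = ρ * (Fᴴ * X * F) * W := by
      calc ρ * (Fᴴ * (X * W) * F) = ρ * (Fᴴ * (X * (W * F))) := by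
            simp only [Matrix.mul_assoc]
        _ = ρ * (Fᴴ * (X * (F * W))) := by rw [hFW]
        _ = ρ * (Fᴴ * X * F) * W := by simp only [Matrix.mul_assoc]
    rw [e3, ← hCE (Fᴴ * X * F) W hW]
  have htracebG : ∀ W ∈ Z, (ρ * (Uᴴ * ((b * G) * W) * U)).trace = (ρ * G * W).trace := by
    intro W hW
    have hbGWZ : (b * G) * W ∈ Z := mul_mem (mul_mem hbZ hGZ) hW
    rw [hZrep _ hbGWZ]
    have e1 : ρ * K * ((b * G) * W) = ρ * ((K * b) * (G * W)) := by
      simp only [Matrix.mul_assoc]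
    rw [e1, hKb, Matrix.one_mul, ← Matrix.mul_assoc]
  -- uniqueness via faithfulness
  have hDiff : V = b * G := by
    set D : Matrix (Fin n) (Fin n) ℂ := V - b * G with hDdef
    have hDZ : D ∈ Z := sub_mem hVZ (mul_mem hbZ hGZ)
    have hDHZ : Dᴴ ∈ Z := Z.star_mem' hDZ
    have hzero : (ρ * (Uᴴ * (D * Dᴴ) * U)).trace = 0 := by
      have h1 := htraceV Dᴴ hDHZ
      have h2 := htracebG Dᴴ hDHZ
      have : (ρ * (Uᴴ * (V * Dᴴ) * U)).trace - (ρ * (Uᴴ * ((b * G) * Dᴴ) * U)).trace = 0 := by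
        rw [h1, h2, sub_self]
      calc (ρ * (Uᴴ * (D * Dᴴ) * U)).trace
          = (ρ * (Uᴴ * (V * Dᴴ) * U)).trace - (ρ * (Uᴴ * ((b * G) * Dᴴ) * U)).trace := by
            rw [← Matrix.trace_sub]
            congr 1
            simp only [hDdef, Matrix.sub_mul, Matrix.mul_sub]
        _ = 0 := this
    have hform : Uᴴ * (D * Dᴴ) * U = (Dᴴ * U)ᴴ * (Dᴴ * U) := by
      simp [Matrix.conjTranspose_mul, Matrix.mul_assoc]
    rw [hform] at hzero
    have : Dᴴ * U = 0 := aux_faithful hρ hzero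
    have hDH : Dᴴ = 0 := by
      have := congrArg (· * Uᴴ) this
      simpa [Matrix.mul_assoc, hU2, Matrix.zero_mul] using this
    have hD0 : D = 0 := by
      have := congrArg Matrix.conjTranspose hDH
      simpa using this
    have := sub_eq_zero.mp hD0
    exact this
  rw [hVeq, hDiff, hRHS]
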